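/- Let a ∈ ℝ with 0 < a < 1, and let μ be a probability measure on ℝ with finite first moment (∫ |x| dμ(x) < ∞). For y ∈ ℝ define the density of the noised variable Y = √a·X + √(1−a)·Z (X ∼ μ, Z standard normal independent of X) by p(y) = ∫ φ_{√a·x, 1−a}(y) dμ(x), where φ_{m,v}(y) = (2πv)^{−1/2} exp( −(y − m)²/(2v) ) is the Gaussian density with mean m and variance v. Then p is differentiable on ℝ, and for every y ∈ ℝ, ∫ x · φ_{√a·x, 1−a}(y) dμ(x) = ( y · p(y) + (1 − a) · p'(y) ) / √a. Consequently, wherever p(y) > 0, the posterior mean E[X | Y = y] = (∫ x · φ_{√a·x, 1−a}(y) dμ(x)) / p(y) equals ( y + (1 − a) · (d/dy) log p(y) ) / √a. -/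

import Mathlib

open MeasureTheory Real

/-- Tweedie's formula in one dimension for the variance-preserving noising
`Y = √a·X + √(1−a)·Z` with `X ∼ μ` and `Z` standard normal: the density of
the noised variable is differentiable, satisfies the identity
`∫ x φ_{√a x, 1−a}(y) dμ = (y p(y) + (1−a) p'(y)) / √a`, and consequently the
posterior mean is `(y + (1−a) (log p)'(y)) / √a` wherever `p(y) > 0`. -/
theorem stmt_4 (a : ℝ) (ha0 : 0 < a) (ha1 : a < 1)
    (μ : Measure ℝ) [IsProbabilityMeasure μ]
    (hmom : Integrable (fun x : ℝ => |x|) μ)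
    (φ : ℝ → ℝ → ℝ → ℝ)
    (hφ : ∀ m v y, φ m v y = (2 * Real.pi * v) ^ (-(1 : ℝ) / 2) *
      Real.exp (-(y - m) ^ 2 / (2 * v)))
    (p : ℝ → ℝ)
    (hp : ∀ y, p y = ∫ x, φ (Real.sqrt a * x) (1 - a) y ∂μ) :
    (∀ y, DifferentiableAt ℝ p y) ∧
    (∀ y, ∫ x, x * φ (Real.sqrt a * x) (1 - a) y ∂μ =
      (y * p y + (1 - a) * deriv p y) / Real.sqrt a) ∧
    (∀ y, 0 < p y →
      (∫ x, x * φ (Real.sqrt a * x) (1 - a) y ∂μ) / p y =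
        (y + (1 - a) * deriv (fun z => Real.log (p z)) y) / Real.sqrt a) := by
  have hv : (0:ℝ) < 1 - a := by linarith
  set s := Real.sqrt a with hs_def
  have hs : 0 < s := Real.sqrt_pos.mpr ha0
  have hs1 : s < 1 := by
    rw [hs_def, show (1:ℝ) = Real.sqrt 1 by simp]
    exact Real.sqrt_lt_sqrt ha0.le ha1
  set c : ℝ := (2 * Real.pi * (1 - a)) ^ (-(1 : ℝ) / 2) with hc_def
  have hc : 0 < c := Real.rpow_pos_of_pos (by positivity) _
  set F : ℝ → ℝ → ℝ := fun y x => c * Real.exp (-(y - s * x) ^ 2 / (2 * (1 - a)))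
    with hF_def
  have hφF : ∀ x y, φ (s * x) (1 - a) y = F y x := fun x y => by
    rw [hφ]
  have hpF : ∀ y, p y = ∫ x, F y x ∂μ := fun y => by
    rw [hp]; exact integral_congr_ae (Filter.Eventually.of_forall fun x => hφF x y)
  -- pointwise derivative in y
  have hderivF : ∀ y x, HasDerivAt (fun z => F z x)
      ((-(y - s * x) / (1 - a)) * F y x) y := by
    intro y x
    have h1 : HasDerivAt (fun z : ℝ => z - s * x) 1 y := (hasDerivAt_id y).sub_const _
    have h2 : HasDerivAt (fun z : ℝ => (z - s * x) ^ 2) (2 * (y - s * x)) y := by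
      have := h1.fun_pow 2
      simpa using this
    have h3 : HasDerivAt (fun z : ℝ => -(z - s * x) ^ 2 / (2 * (1 - a)))
        (-(y - s * x) / (1 - a)) y := by
      have h4 : HasDerivAt (fun z : ℝ => (-(1:ℝ) / (2 * (1 - a))) * (z - s * x) ^ 2)
          ((-(1:ℝ) / (2 * (1 - a))) * (2 * (y - s * x))) y := h2.const_mul _
      have heq : (fun z : ℝ => (-(1:ℝ) / (2 * (1 - a))) * (z - s * x) ^ 2)
          = fun z : ℝ => -(z - s * x) ^ 2 / (2 * (1 - a)) := by
        funext z; ring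
      rw [heq] at h4
      convert h4 using 1
      field_simp
    have h5 : HasDerivAt (fun y => c * rexp (-(y - s * x) ^ 2 / (2 * (1 - a))))
        (c * (rexp (-(y - s * x) ^ 2 / (2 * (1 - a))) * (-(y - s * x) / (1 - a)))) y :=
      (h3.exp).const_mul c
    convert h5 using 1
    simp only [hF_def]
    ring
  have hFpos : ∀ y x, 0 < F y x := fun y x => by positivity
  have hFle : ∀ y x, F y x ≤ c := fun y x => by
    simp only [hF_def]
    nth_rewrite 2 [show c = c * 1 by ring]
    gcongr
    exact Real.exp_le_one_iff.mpr
      (div_nonpos_of_nonpos_of_nonneg (neg_nonpos.mpr (sq_nonneg _)) (by positivity))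
  have hFcont : ∀ y, Continuous (F y) := fun y => by
    apply Continuous.mul continuous_const
    exact Real.continuous_exp.comp (by fun_prop)
  have hFmeas : ∀ y, AEStronglyMeasurable (F y) μ := fun y =>
    (hFcont y).aestronglyMeasurable
  have hFint : ∀ y, Integrable (F y) μ := fun y => by
    refine (integrable_const c).mono' (hFmeas y) ?_
    exact Filter.Eventually.of_forall fun x => by
      rw [Real.norm_eq_abs, abs_of_pos (hFpos y x)]; exact hFle y x
  have hxFint : ∀ y, Integrable (fun x => x * F y x) μ := fun y => by
    refine (hmom.const_mul c).mono' ?_ ?_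
    · exact (continuous_id.mul (hFcont y)).aestronglyMeasurable
    · refine Filter.Eventually.of_forall fun x => ?_
      rw [Real.norm_eq_abs, abs_mul, abs_of_pos (hFpos y x)]
      calc |x| * F y x ≤ |x| * c := by
            exact mul_le_mul_of_nonneg_left (hFle y x) (abs_nonneg x)
        _ = c * |x| := by ring
  -- derivative of p
  have hderivp : ∀ y₀, HasDerivAt p (∫ x, (-(y₀ - s * x) / (1 - a)) * F y₀ x ∂μ) y₀ := by
    intro y₀
    have key := hasDerivAt_integral_of_dominated_loc_of_deriv_le
      (F := fun y x => F y x) (F' := fun y x => (-(y - s * x) / (1 - a)) * F y x)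
      (μ := μ) (x₀ := y₀) (bound := fun x => c * (|y₀| + 1 + |x|) / (1 - a))
      (s := Metric.ball y₀ 1) (Metric.ball_mem_nhds y₀ one_pos)
      (Filter.Eventually.of_forall fun y => hFmeas y)
      (hFint y₀)
      (((by fun_prop : Continuous fun x : ℝ => -(y₀ - s * x) / (1 - a)).mul (hFcont y₀)).aestronglyMeasurable)
      ?_ ?_
      (Filter.Eventually.of_forall fun x y _ => hderivF y x)
    · have := key.2
      have hpeq : p = fun y => ∫ x, F y x ∂μ := funext hpF
      rw [hpeq]
      exact this
    · refine Filter.Eventually.of_forall fun x y hy => ?_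
      rw [Real.norm_eq_abs, abs_mul, abs_of_pos (hFpos y x), abs_div,
        abs_of_pos hv, abs_neg]
      have h1 : |y - s * x| ≤ |y₀| + 1 + |x| := by
        have hyb : |y - y₀| < 1 := by simpa [Real.dist_eq] using hy
        have : |y| ≤ |y₀| + 1 := by
          have := abs_sub_abs_le_abs_sub y y₀
          linarith
        calc |y - s * x| ≤ |y| + |s * x| := abs_sub y (s * x)
          _ ≤ (|y₀| + 1) + |x| := by
              refine add_le_add this ?_
              rw [abs_mul, abs_of_pos hs]
              nth_rewrite 2 [show |x| = 1 * |x| by ring]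
              exact mul_le_mul_of_nonneg_right hs1.le (abs_nonneg x)
      calc |y - s * x| / (1 - a) * F y x ≤ (|y₀| + 1 + |x|) / (1 - a) * c := by
            apply mul_le_mul (by gcongr) (hFle y x) (hFpos y x).le (by positivity)
        _ = c * (|y₀| + 1 + |x|) / (1 - a) := by ring
    · have heq : (fun x : ℝ => c * (|y₀| + 1 + |x|) / (1 - a))
          = fun x : ℝ => c * (|y₀| + 1) / (1 - a) + (c / (1 - a)) * |x| := by
        funext x; field_simp
      rw [heq]
      exact (integrable_const _).add (hmom.const_mul _)
  -- key identity
  have hkey : ∀ y, ∫ x, x * F y x ∂μ =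
      (y * p y + (1 - a) * deriv p y) / s := by
    intro y
    have hd := hderivp y
    have hderiv_eq : deriv p y = ∫ x, (-(y - s * x) / (1 - a)) * F y x ∂μ := hd.deriv
    have hsplit : ∫ x, (-(y - s * x) / (1 - a)) * F y x ∂μ
        = (s / (1 - a)) * ∫ x, x * F y x ∂μ - (y / (1 - a)) * ∫ x, F y x ∂μ := by
      rw [← integral_const_mul, ← integral_const_mul, ← integral_sub
        ((hxFint y).const_mul _) ((hFint y).const_mul _)]
      refine integral_congr_ae (Filter.Eventually.of_forall fun x => ?_)
      field_simp
      ring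
    rw [hderiv_eq, hsplit, hpF y]
    field_simp
    try ring
  refine ⟨fun y => (hderivp y).differentiableAt, fun y => ?_, fun y hpy => ?_⟩
  · rw [show (∫ x, x * φ (Real.sqrt a * x) (1 - a) y ∂μ) = ∫ x, x * F y x ∂μ from
      integral_congr_ae (Filter.Eventually.of_forall fun x => by
        simp only [← hs_def, hφF]),
      hkey y]
  · have hI : (∫ x, x * φ (Real.sqrt a * x) (1 - a) y ∂μ) = ∫ x, x * F y x ∂μ :=
      integral_congr_ae (Filter.Eventually.of_forall fun x => by simp only [← hs_def, hφF])
    have hlog : deriv (fun z => Real.log (p z)) y = deriv p y / p y := by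
      have := ((hderivp y).log (ne_of_gt hpy))
      have h2 := this.deriv
      rw [h2, (hderivp y).deriv]
    rw [hI, hkey y, hlog]
    have hp0 : p y ≠ 0 := ne_of_gt hpy
    have hs0 : s ≠ 0 := ne_of_gt hs
    rw [div_div]
    rw [div_eq_div_iff (by positivity) hs0]
    field_simp
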